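/- arXiv:0911.2372 — 4 statements merged into one kernel-verified Lean document; each statement's English description precedes it below -/
import Mathlib

section
/- With the Caratheodory transform as above (f* = γf, φ* = γφ, (p*)^t = γqA, (q*)^t = A^{-1}p, where A = fI - pq and γ = f^{n-2}/det A), if f + φ = tr(pq) then f* + φ* = tr(p* q*). -/
/-- The Caratheodory transform preserves the relation `f + φ = tr (p q)`:
if `f + φ = tr (p q)` then `f* + φ* = tr (p* q*)`. -/
theorem caratheodory_preserves_relation (n ν : ℕ) (f φ : ℝ) (hf : f ≠ 0)
    (p : Matrix (Fin n) (Fin ν) ℝ) (q : Matrix (Fin ν) (Fin n) ℝ)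
    (A : Matrix (Fin n) (Fin n) ℝ)
    (hA : A = f • (1 : Matrix (Fin n) (Fin n) ℝ) - p * q) (hAinv : IsUnit A.det)
    (γ : ℝ) (hγ : γ = f ^ (n - 2) / A.det)
    (fstar φstar : ℝ) (hfstar : fstar = γ * f) (hφstar : φstar = γ * φ)
    (pstar : Matrix (Fin n) (Fin ν) ℝ) (hp : pstar.transpose = γ • (q * A))
    (qstar : Matrix (Fin ν) (Fin n) ℝ) (hq : qstar.transpose = A⁻¹ * p)
    (hrel : f + φ = (p * q).trace) :
    fstar + φstar = (pstar * qstar).trace := by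
  have key : (pstar * qstar).trace = ((pstar * qstar).transpose).trace :=
    (Matrix.trace_transpose _).symm
  rw [key, Matrix.transpose_mul, hp, hq]
  have : A⁻¹ * p * (γ • (q * A)) = γ • (A⁻¹ * (p * q) * A) := by
    simp [Matrix.mul_smul, Matrix.mul_assoc]
  rw [this, Matrix.trace_smul, Matrix.trace_mul_comm, ← Matrix.mul_assoc,
    Matrix.mul_nonsing_inv A hAinv, Matrix.one_mul]
  rw [hfstar, hφstar, ← mul_add, hrel]
  rfl
end

section
/- For the matrix A* = f*I - p*q* arising from the Caratheodory transform, one has A* = γ A^t, where A = fI - pq and γ = f^{n-2}/det A. In particular det A* = γ^n det A. -/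
/-- For the matrix `A* = f* I - p* q*` arising from the Caratheodory transform one has
`A* = γ Aᵀ`, and in particular `det A* = γ ^ n · det A`. -/
theorem caratheodory_Astar_eq (n ν : ℕ) (f : ℝ) (hf : f ≠ 0)
    (p : Matrix (Fin n) (Fin ν) ℝ) (q : Matrix (Fin ν) (Fin n) ℝ)
    (A : Matrix (Fin n) (Fin n) ℝ)
    (hA : A = f • (1 : Matrix (Fin n) (Fin n) ℝ) - p * q) (hAinv : IsUnit A.det)
    (γ : ℝ) (hγ : γ = f ^ (n - 2) / A.det)
    (fstar : ℝ) (hfstar : fstar = γ * f)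
    (pstar : Matrix (Fin n) (Fin ν) ℝ) (hp : pstar.transpose = γ • (q * A))
    (qstar : Matrix (Fin ν) (Fin n) ℝ) (hq : qstar.transpose = A⁻¹ * p)
    (Astar : Matrix (Fin n) (Fin n) ℝ)
    (hAstar : Astar = fstar • (1 : Matrix (Fin n) (Fin n) ℝ) - pstar * qstar) :
    Astar = γ • A.transpose ∧ Astar.det = γ ^ n * A.det := by
  have hpq : p * q = f • (1 : Matrix (Fin n) (Fin n) ℝ) - A := by rw [hA]; abel
  have hinv : A⁻¹ * A = 1 := Matrix.nonsing_inv_mul A hAinv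
  have hps : pstar * qstar = γ • (f • (1 : Matrix (Fin n) (Fin n) ℝ) - A.transpose) := by
    have : (pstar * qstar).transpose = (γ • (f • (1 : Matrix (Fin n) (Fin n) ℝ)
        - A.transpose)).transpose := by
      rw [Matrix.transpose_mul, hq, hp, Matrix.transpose_smul, Matrix.transpose_sub,
        Matrix.transpose_smul, Matrix.transpose_one, Matrix.transpose_transpose]
      rw [Matrix.mul_smul]
      congr 1
      rw [Matrix.mul_assoc, ← Matrix.mul_assoc p q, hpq, Matrix.sub_mul, Matrix.smul_mul, Matrix.one_mul,
        Matrix.mul_sub, ← Matrix.mul_assoc, Matrix.mul_smul, hinv, Matrix.one_mul]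
    simpa using congrArg Matrix.transpose this
  have h1 : Astar = γ • A.transpose := by
    rw [hAstar, hps, hfstar, smul_sub, mul_smul]
    abel
  refine ⟨h1, ?_⟩
  rw [h1, Matrix.det_smul, Matrix.det_transpose, Fintype.card_fin]
end

section
/- Define the Weierstrass-type function E(q) = f(q) - (1/(C(n,k) f̂^{k-1})) Σ_{|K|=k} det( f̂ I_K + (n/k) [p̂ (q - g)]_K ), where the determinant is over the k×k submatrix indexed by K of the n×n matrix f̂ δ^i_j + (n/k) Σ_α p̂^i_α (q^α_j - g^α_j), with p̂^i_α := ∂f/∂q^α_i evaluated at q = g and f̂ := f(g) ≠ 0. Then E(g) = 0 and ∂E/∂q^α_i (g) = 0 for all i, α. -/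
open Finset in
theorem aux_det_diag {ι : Type*} [Fintype ι] [DecidableEq ι]
    {V : Type*} [NormedAddCommGroup V] [NormedSpace ℝ V]
    {A : V → Matrix ι ι ℝ} {A' : ι → ι → V →L[ℝ] ℝ} {x : V} {c : ℝ}
    (hA : ∀ i j, HasFDerivAt (fun q => A q i j) (A' i j) x)
    (hx : ∀ i j, A x i j = if i = j then c else 0) :
    HasFDerivAt (fun q => (A q).det)
      ((c ^ (Fintype.card ι - 1)) • ∑ i, A' i i) x := by
  have key : HasFDerivAt (fun q => ∑ σ : Equiv.Perm ι,
        ((Equiv.Perm.sign σ : ℤ) : ℝ) * ∏ i, A q (σ i) i)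
      (∑ σ : Equiv.Perm ι, ((Equiv.Perm.sign σ : ℤ) : ℝ) •
        ∑ i, (∏ j ∈ univ.erase i, A x (σ j) j) • A' (σ i) i) x := by
    apply HasFDerivAt.fun_sum
    intro σ _
    exact (HasFDerivAt.finset_prod (fun i _ => hA (σ i) i)).const_mul _
  have hfun : (fun q => (A q).det)
      = fun q => ∑ σ : Equiv.Perm ι, ((Equiv.Perm.sign σ : ℤ) : ℝ) * ∏ i, A q (σ i) i := by
    funext q; exact Matrix.det_apply' (A q)
  rw [hfun]
  convert key using 1
  rw [Finset.sum_eq_single (1 : Equiv.Perm ι)]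
  · have hc : ∀ i : ι, ∏ j ∈ univ.erase i, A x j j = c ^ (Fintype.card ι - 1) := by
      intro i
      rw [Finset.prod_congr rfl (fun j _ => by rw [hx j j, if_pos rfl]),
        Finset.prod_const, Finset.card_erase_of_mem (mem_univ i), card_univ]
    simp only [Equiv.Perm.sign_one, Units.val_one, Int.cast_one, one_smul, Equiv.Perm.one_apply]
    rw [Finset.smul_sum]
    exact Finset.sum_congr rfl fun i _ => by rw [hc i]
  · intro σ _ hσ
    have hzero : ∀ i : ι, ∏ j ∈ univ.erase i, A x (σ j) j = 0 := by
      intro i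
      obtain ⟨j, hj, hji⟩ : ∃ j ∈ σ.support, j ≠ i := by
        by_contra h
        push_neg at h
        have hsub : σ.support ⊆ {i} := fun a ha => Finset.mem_singleton.2 (h a ha)
        have := Finset.card_le_card hsub
        have h2 := Equiv.Perm.one_lt_card_support_of_ne_one hσ
        simp only [Finset.card_singleton] at this
        omega
      refine Finset.prod_eq_zero (Finset.mem_erase.2 ⟨hji, mem_univ j⟩) ?_
      rw [hx, if_neg (Equiv.Perm.mem_support.1 hj)]
    simp [hzero]
  · simp


open Finset in
theorem aux_count {n k : ℕ} (hk : 1 ≤ k) (i₀ : Fin n) :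
    (((Finset.univ : Finset (Fin n)).powersetCard k).filter (fun K => i₀ ∈ K)).card
      = (n - 1).choose (k - 1) := by
  have hbij : (((Finset.univ : Finset (Fin n)).powersetCard k).filter (fun K => i₀ ∈ K)).card
      = ((Finset.univ.erase i₀).powersetCard (k - 1)).card := by
    apply Finset.card_bij (fun K _ => K.erase i₀)
    · intro K hK
      simp only [mem_filter, mem_powersetCard] at hK
      obtain ⟨⟨_, hcard⟩, hmem⟩ := hK
      exact mem_powersetCard.2 ⟨fun a ha => mem_erase.2 ⟨(mem_erase.1 ha).1, mem_univ a⟩,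
        by rw [card_erase_of_mem hmem, hcard]⟩
    · intro K hK K' hK' h
      simp only [mem_filter] at hK hK'
      rw [← insert_erase hK.2, ← insert_erase hK'.2, h]
    · intro K hK
      simp only [mem_powersetCard] at hK
      have hni : i₀ ∉ K := fun h => (mem_erase.1 (hK.1 h)).1 rfl
      refine ⟨insert i₀ K, ?_, ?_⟩
      · simp only [mem_filter, mem_powersetCard]
        refine ⟨⟨subset_univ _, ?_⟩, mem_insert_self _ _⟩
        rw [card_insert_of_notMem hni, hK.2]; omega
      · rw [erase_insert hni]
  rw [hbij, card_powersetCard, card_erase_of_mem (mem_univ i₀), card_univ, Fintype.card_fin]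


/-- The Weierstrass-type function
`E(q) = f(q) - (1/(C(n,k) f̂^{k-1})) Σ_{|K|=k} det (f̂ I + (n/k) p̂ (q - g))_K`
vanishes at `q = g` together with all its first partial derivatives. -/
theorem weierstrass_function_first_order (n ν k : ℕ) (hk1 : 1 ≤ k) (hkn : k ≤ n)
    (f : (Fin n → Fin ν → ℝ) → ℝ) (hf : Differentiable ℝ f)
    (g : Fin n → Fin ν → ℝ)
    (fhat : ℝ) (hfhat : fhat = f g) (hne : fhat ≠ 0)
    (phat : Fin n → Fin ν → ℝ)
    (hphat : ∀ i α, phat i α = fderiv ℝ f g (Pi.single i (Pi.single α 1)))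
    (M : (Fin n → Fin ν → ℝ) → Matrix (Fin n) (Fin n) ℝ)
    (hM : ∀ q i j, M q i j
      = fhat * (if i = j then 1 else 0)
        + ((n : ℝ) / (k : ℝ)) * ∑ α, phat i α * (q j α - g j α))
    (E : (Fin n → Fin ν → ℝ) → ℝ)
    (hE : ∀ q, E q
      = f q - (1 / ((n.choose k : ℝ) * fhat ^ (k - 1))) *
          ∑ K ∈ Finset.univ.powersetCard k,
            ((M q).submatrix (fun i : {x : Fin n // x ∈ K} => (i : Fin n))
              (fun j : {x : Fin n // x ∈ K} => (j : Fin n))).det) :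
    E g = 0 ∧ ∀ i α, fderiv ℝ E g (Pi.single i (Pi.single α 1)) = 0 := by
  classical
  set P : Fin n → Fin ν → ((Fin n → Fin ν → ℝ) →L[ℝ] ℝ) := fun j α =>
    (ContinuousLinearMap.proj α : (Fin ν → ℝ) →L[ℝ] ℝ).comp
      (ContinuousLinearMap.proj j : (Fin n → Fin ν → ℝ) →L[ℝ] (Fin ν → ℝ)) with hPdef
  set L : Fin n → Fin n → (Fin n → Fin ν → ℝ) →L[ℝ] ℝ := fun i j =>
    ((n : ℝ) / (k : ℝ)) • ∑ α, phat i α • P j α with hLdef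
  have hentry : ∀ i j, HasFDerivAt (fun q : Fin n → Fin ν → ℝ => M q i j) (L i j) g := by
    intro i j
    have heq : (fun q : Fin n → Fin ν → ℝ => M q i j)
        = fun q => fhat * (if i = j then 1 else 0)
          + ((n : ℝ) / (k : ℝ)) * ∑ α, phat i α * (q j α - g j α) := by
      funext q; exact hM q i j
    rw [heq]
    apply HasFDerivAt.const_add
    have hsum : HasFDerivAt (fun q : Fin n → Fin ν → ℝ => ∑ α, phat i α * (q j α - g j α))
        (∑ α, phat i α • P j α) g := by
      apply HasFDerivAt.fun_sum
      intro α _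
      have hproj : HasFDerivAt (fun q : Fin n → Fin ν → ℝ => q j α) (P j α) g :=
        (P j α).hasFDerivAt
      exact (hproj.sub_const (g j α)).const_mul (phat i α)
    exact hsum.const_mul _
  -- values of M at g
  have hMg : ∀ i j, M g i j = if i = j then fhat else 0 := by
    intro i j
    rw [hM]
    simp [mul_ite, sub_self]
  -- derivative of each determinant
  have hdet : ∀ K ∈ (Finset.univ : Finset (Fin n)).powersetCard k,
      HasFDerivAt (fun q : Fin n → Fin ν → ℝ =>
          ((M q).submatrix (fun i : {x : Fin n // x ∈ K} => (i : Fin n))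
            (fun j : {x : Fin n // x ∈ K} => (j : Fin n))).det)
        (fhat ^ (k - 1) • ∑ i : {x : Fin n // x ∈ K}, L (i : Fin n) (i : Fin n)) g := by
    intro K hK
    have hcard : Fintype.card {x : Fin n // x ∈ K} = k := by
      rw [Fintype.card_coe]; exact (Finset.mem_powersetCard.1 hK).2
    have h := aux_det_diag
      (A := fun q : Fin n → Fin ν → ℝ => (M q).submatrix (fun i : {x : Fin n // x ∈ K} => (i : Fin n))
        (fun j : {x : Fin n // x ∈ K} => (j : Fin n)))
      (A' := fun i j : {x : Fin n // x ∈ K} => L (i : Fin n) (j : Fin n)) (x := g) (c := fhat)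
      (fun i j => hentry (i : Fin n) (j : Fin n))
      (fun i j => by
        simp only [Matrix.submatrix_apply, hMg]
        by_cases h : i = j
        · rw [if_pos (by exact_mod_cast congrArg Subtype.val h), if_pos h]
        · rw [if_neg (fun hc => h (Subtype.ext hc)), if_neg h])
    rwa [hcard] at h
  -- derivative of E
  have hEfun : E = fun q => f q - (1 / ((n.choose k : ℝ) * fhat ^ (k - 1))) *
      ∑ K ∈ Finset.univ.powersetCard k,
        ((M q).submatrix (fun i : {x : Fin n // x ∈ K} => (i : Fin n))
          (fun j : {x : Fin n // x ∈ K} => (j : Fin n))).det := funext hE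
  have hE' : HasFDerivAt E
      (fderiv ℝ f g - (1 / ((n.choose k : ℝ) * fhat ^ (k - 1))) •
        ∑ K ∈ (Finset.univ : Finset (Fin n)).powersetCard k,
          fhat ^ (k - 1) • ∑ i : {x : Fin n // x ∈ K}, L (i : Fin n) (i : Fin n)) g := by
    rw [hEfun]
    exact ((hf g).hasFDerivAt).sub ((HasFDerivAt.fun_sum hdet).const_mul _)
  have hC : ((n.choose k : ℝ)) ≠ 0 := Nat.cast_ne_zero.2 (Nat.choose_pos hkn).ne'
  have hk0 : (k : ℝ) ≠ 0 := Nat.cast_ne_zero.2 (by omega)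
  have hpow : fhat ^ k = fhat ^ (k - 1) * fhat := by
    conv_lhs => rw [← Nat.sub_add_cancel hk1]
    rw [pow_succ]
  constructor
  · -- E g = 0
    rw [hE g]
    have hdetg : ∀ K ∈ (Finset.univ : Finset (Fin n)).powersetCard k,
        ((M g).submatrix (fun i : {x : Fin n // x ∈ K} => (i : Fin n))
          (fun j : {x : Fin n // x ∈ K} => (j : Fin n))).det = fhat ^ k := by
      intro K hK
      have hcard : Fintype.card {x : Fin n // x ∈ K} = k := by
        rw [Fintype.card_coe]; exact (Finset.mem_powersetCard.1 hK).2
      have hone : ((M g).submatrix (fun i : {x : Fin n // x ∈ K} => (i : Fin n))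
          (fun j : {x : Fin n // x ∈ K} => (j : Fin n)))
          = fhat • (1 : Matrix {x : Fin n // x ∈ K} {x : Fin n // x ∈ K} ℝ) := by
        ext i j
        simp only [Matrix.submatrix_apply, hMg, Matrix.smul_apply, Matrix.one_apply, smul_eq_mul]
        by_cases h : i = j
        · rw [if_pos (by exact_mod_cast congrArg Subtype.val h), if_pos h, mul_one]
        · rw [if_neg (fun hc => h (Subtype.ext hc)), if_neg h, mul_zero]
      rw [hone, Matrix.det_smul, Matrix.det_one, hcard, mul_one]
    rw [Finset.sum_congr rfl hdetg, Finset.sum_const, Finset.card_powersetCard,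
      Finset.card_univ, Fintype.card_fin, nsmul_eq_mul]
    rw [← hfhat, hpow]
    field_simp
    ring
  · -- derivatives vanish
    intro i₀ α₀
    have hLval : ∀ i : Fin n, L i i (Pi.single i₀ (Pi.single α₀ 1))
        = if i = i₀ then ((n : ℝ) / (k : ℝ)) * phat i₀ α₀ else 0 := by
      intro i
      rw [hLdef]
      simp only [ContinuousLinearMap.smul_apply, ContinuousLinearMap.sum_apply,
        ContinuousLinearMap.smul_apply, smul_eq_mul, hPdef,
        ContinuousLinearMap.comp_apply, ContinuousLinearMap.proj_apply]
      by_cases h : i = i₀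
      · subst h
        simp [Pi.single_apply, mul_ite, Finset.sum_ite_eq']
      · simp [Pi.single_eq_of_ne h, h]
    have hsumK : ∀ K ∈ (Finset.univ : Finset (Fin n)).powersetCard k,
        (∑ d : {x : Fin n // x ∈ K}, L (d : Fin n) (d : Fin n) (Pi.single i₀ (Pi.single α₀ 1)))
          = if i₀ ∈ K then ((n : ℝ) / (k : ℝ)) * phat i₀ α₀ else 0 := by
      intro K _
      simp only [hLval]
      by_cases hmem : i₀ ∈ K
      · rw [if_pos hmem, Finset.sum_eq_single_of_mem (⟨i₀, hmem⟩ : {x : Fin n // x ∈ K})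
          (Finset.mem_univ _)]
        · rw [if_pos rfl]
        · intro b _ hb
          rw [if_neg (fun hc => hb (Subtype.ext hc))]
      · rw [if_neg hmem]
        apply Finset.sum_eq_zero
        intro b _
        exact if_neg (fun hc : (b : Fin n) = i₀ => hmem (hc ▸ b.2))
    rw [hE'.fderiv]
    simp only [ContinuousLinearMap.coe_sub', Pi.sub_apply, ContinuousLinearMap.smul_apply,
      ContinuousLinearMap.coe_smul', Pi.smul_apply, ContinuousLinearMap.sum_apply, smul_eq_mul]
    have hstep : ∑ K ∈ (Finset.univ : Finset (Fin n)).powersetCard k,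
        fhat ^ (k - 1) * (∑ d : {x : Fin n // x ∈ K},
          L (d : Fin n) (d : Fin n) (Pi.single i₀ (Pi.single α₀ 1)))
        = ((n - 1).choose (k - 1) : ℝ) * (fhat ^ (k - 1) * (((n : ℝ) / (k : ℝ)) * phat i₀ α₀)) := by
      rw [Finset.sum_congr rfl (fun K hK => by rw [hsumK K hK])]
      simp only [mul_ite, mul_zero]
      rw [← Finset.sum_filter, Finset.sum_const, aux_count hk1 i₀, nsmul_eq_mul]
    rw [hstep, ← hphat i₀ α₀]
    have hid : (n : ℝ) * ((n - 1).choose (k - 1) : ℝ) = (n.choose k : ℝ) * (k : ℝ) := by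
      have h : n * ((n - 1).choose (k - 1)) = n.choose k * k := by
        obtain ⟨n', rfl⟩ : ∃ n', n = n' + 1 := ⟨n - 1, by omega⟩
        obtain ⟨k', rfl⟩ : ∃ k', k = k' + 1 := ⟨k - 1, by omega⟩
        simpa using Nat.add_one_mul_choose_eq n' k'
      exact_mod_cast h
    have hfp : fhat ^ (k - 1) ≠ 0 := pow_ne_zero _ hne
    field_simp
    ring_nf
    linear_combination (-(phat i₀ α₀)) * hid
end

section
/- Let E be the Weierstrass-type function of the previous statement. Its Hessian at q = g equals ∂²E/∂q^λ_l ∂q^μ_m (g) = ∂²f/∂q^λ_l ∂q^μ_m (g) - (n(k-1))/(k(n-1) f̂) · (p̂^l_λ p̂^m_μ - p̂^l_μ p̂^m_λ) for l ≠ m (and equals the Hessian of f for l = m), where the correction term is a skew form vanishing on rank-one matrices; hence the Hessian of E and the Hessian of f agree as quadratic forms on rank-one matrices q^α_i = ξ^α η_i. -/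
noncomputable def detCML (ι : Type*) [Fintype ι] [DecidableEq ι] :
    ContinuousMultilinearMap ℝ (fun _ : ι => ι → ℝ) ℝ where
  toMultilinearMap := (Matrix.detRowAlternating (n := ι) (R := ℝ)).toMultilinearMap
  cont := by
    have : Continuous fun m : Matrix ι ι ℝ => m.det := Continuous.matrix_det continuous_id
    exact this

lemma detCML_apply (ι : Type*) [Fintype ι] [DecidableEq ι] (m : ∀ _ : ι, ι → ℝ) :
    detCML ι m = Matrix.det (Matrix.of m) := rfl

lemma detCML_update_zero {ι : Type*} [Fintype ι] [DecidableEq ι] (x : ∀ _ : ι, ι → ℝ) (i : ι) :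
    detCML ι (Function.update x i 0) = 0 :=
  (detCML ι).map_coord_zero i (Function.update_self i 0 x)

lemma det_rows_single {ι : Type*} [Fintype ι] [DecidableEq ι] (coef : ι → ℝ) (σ : ι → ι) :
    Matrix.det (Matrix.of (fun r => coef r • (Pi.single (σ r) (1:ℝ) : ι → ℝ))) =
      if hσ : Function.Bijective σ then ((Equiv.Perm.sign (Equiv.ofBijective σ hσ) : ℤ) : ℝ) * ∏ r, coef r
      else 0 := by
  split_ifs with hσ
  · have hM : (Matrix.of (fun r => coef r • (Pi.single (σ r) (1:ℝ) : ι → ℝ)))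
        = Matrix.diagonal coef * (Equiv.Perm.permMatrix ℝ (Equiv.ofBijective σ hσ)) := by
      ext r s
      simp [Matrix.diagonal_mul, Equiv.Perm.permMatrix, PEquiv.toMatrix_apply,
        Equiv.toPEquiv_apply, Pi.single_apply, Equiv.ofBijective_apply, eq_comm]
    rw [hM, Matrix.det_mul, Matrix.det_diagonal, Matrix.det_permutation]
    push_cast
    ring
  · have hns : ¬ Function.Surjective σ := fun hs => hσ (Finite.surjective_iff_bijective.mp hs)
    rw [Function.Surjective] at hns
    push_neg at hns
    obtain ⟨s, hs⟩ := hns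
    apply Matrix.det_eq_zero_of_column_eq_zero s
    intro r
    simp [Pi.single_apply, (hs r)]

lemma det_updateTwo {ι : Type*} [Fintype ι] [DecidableEq ι] (c : ℝ) (i j a b : ι)
    (hij : i ≠ j) :
    Matrix.det (Matrix.of (Function.update (Function.update
        (fun r s => c * (if r = s then (1:ℝ) else 0)) i (Pi.single a (1:ℝ))) j
        (Pi.single b (1:ℝ)))) =
      c ^ (Fintype.card ι - 2) *
        ((if i = a ∧ j = b then (1:ℝ) else 0) - (if i = b ∧ j = a then 1 else 0)) := by
  classical
  set coef : ι → ℝ := fun r => if r = i ∨ r = j then 1 else c with hcoef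
  set σ : ι → ι := fun r => if r = j then b else if r = i then a else r with hσdef
  have hσi : σ i = a := by simp [hσdef, hij]
  have hσj : σ j = b := by simp [hσdef]
  have hrows : (Function.update (Function.update
        (fun r s => c * (if r = s then (1:ℝ) else 0)) i (Pi.single a (1:ℝ))) j
        (Pi.single b (1:ℝ))) = fun r => coef r • (Pi.single (σ r) (1:ℝ) : ι → ℝ) := by
    funext r
    rcases eq_or_ne r j with rfl | hrj
    · simp [hcoef, hσdef]
    · rcases eq_or_ne r i with rfl | hri
      · simp [Function.update_of_ne hrj, hcoef, hσdef, hrj]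
      · funext s
        simp only [Function.update_of_ne hrj, Function.update_of_ne hri, hcoef, hσdef,
          if_neg hri, if_neg hrj, hri, hrj, or_self, if_false, smul_eq_mul, Pi.single_apply]
        rcases eq_or_ne r s with rfl | hrs
        · simp
        · simp [hrs, Ne.symm hrs]
  have hprod : ∏ r, coef r = c ^ (Fintype.card ι - 2) := by
    rw [hcoef, Finset.prod_ite, Finset.prod_const_one, Finset.prod_const, one_mul]
    congr 1
    have h1 : (Finset.univ.filter fun r => r = i ∨ r = j) = ({i, j} : Finset ι) := by
      ext r; simp
    rw [Finset.filter_not, Finset.card_sdiff_of_subset (Finset.filter_subset _ _), h1,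
      Finset.card_pair hij, Finset.card_univ]
  rw [hrows, det_rows_single]
  by_cases h1 : i = a ∧ j = b
  · have hσid : σ = id := by
      funext r
      simp only [hσdef, id_eq]
      split_ifs with h h'
      · rw [h, ← h1.2]
      · rw [h', ← h1.1]
      · rfl
    have hb : Function.Bijective σ := by rw [hσid]; exact Function.bijective_id
    rw [dif_pos hb]
    have heq : Equiv.ofBijective σ hb = 1 := by
      ext r; simp [hσid]
    have h2' : ¬(i = b ∧ j = a) := fun h => hij (h.1.trans h1.2.symm)
    rw [heq, hprod, Equiv.Perm.sign_one, if_pos h1, if_neg h2']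
    push_cast
    ring
  · by_cases h2 : i = b ∧ j = a
    · have hσsw : σ = ⇑(Equiv.swap i j) := by
        funext r
        simp only [hσdef, Equiv.swap_apply_def]
        split_ifs with hrj hri hri hrj'
        · exact absurd (hri.symm.trans hrj) hij
        · rw [← h2.1]
        · rw [← h2.2]
        · rfl
      have hb : Function.Bijective σ := by rw [hσsw]; exact (Equiv.swap i j).bijective
      rw [dif_pos hb]
      have heq : Equiv.ofBijective σ hb = Equiv.swap i j := by
        ext r; rw [Equiv.ofBijective_apply, hσsw]
      rw [heq, hprod, Equiv.Perm.sign_swap hij, if_neg h1, if_pos h2]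
      push_cast
      ring
    · have hnb : ¬ Function.Bijective σ := by
        intro hb
        have hinj := hb.injective
        by_cases hab : a = b
        · exact hij (hinj (by rw [hσi, hσj, hab]))
        · by_cases hai : a = i
          · have hjb : j ≠ b := fun h => h1 ⟨hai.symm, h⟩
            by_cases hbi : b = i
            · exact hab (hai.trans hbi.symm)
            · by_cases hbj : b = j
              · exact hjb hbj.symm
              · have hfb : σ b = b := by simp [hσdef, hbi, hbj]
                exact hbj (hinj (by rw [hfb, hσj]))
          · by_cases haj : a = j
            · have hib : i ≠ b := fun h => h2 ⟨h, haj.symm⟩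
              by_cases hbi : b = i
              · exact hib hbi.symm
              · by_cases hbj : b = j
                · exact hab ((haj.trans hbj.symm).symm).symm
                · have hfb : σ b = b := by simp [hσdef, hbi, hbj]
                  exact hbj (hinj (by rw [hfb, hσj]))
            · have hfa : σ a = a := by simp [hσdef, hai, haj]
              exact hai (hinj (by rw [hfa, hσi]))
      rw [dif_neg hnb]
      simp [h1, h2]

lemma count_pairs {n k : ℕ} (hk2 : 2 ≤ k) (l m : Fin n) (hlm : l ≠ m) :
    ((Finset.univ.powersetCard k).filter (fun K : Finset (Fin n) => l ∈ K ∧ m ∈ K)).card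
      = (n - 2).choose (k - 2) := by
  classical
  have := Finset.card_bij'
    (s := (Finset.univ.powersetCard k).filter (fun K : Finset (Fin n) => l ∈ K ∧ m ∈ K))
    (t := ((Finset.univ : Finset (Fin n)).erase l |>.erase m).powersetCard (k - 2))
    (i := fun K _ => (K.erase l).erase m)
    (j := fun S _ => insert l (insert m S))
    ?_ ?_ ?_ ?_
  · rw [this, Finset.card_powersetCard]
    congr 1
    rw [Finset.card_erase_of_mem (Finset.mem_erase.mpr ⟨Ne.symm hlm, Finset.mem_univ m⟩),
      Finset.card_erase_of_mem (Finset.mem_univ l), Finset.card_univ, Fintype.card_fin]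
    omega
  · intro K hK
    simp only [Finset.mem_filter, Finset.mem_powersetCard] at hK ⊢
    obtain ⟨⟨_, hcard⟩, hl, hm⟩ := hK
    constructor
    · intro x hx
      simp only [Finset.mem_erase] at hx ⊢
      exact ⟨hx.1, hx.2.1, Finset.mem_univ x⟩
    · rw [Finset.card_erase_of_mem (Finset.mem_erase.mpr ⟨Ne.symm hlm, hm⟩),
        Finset.card_erase_of_mem hl, hcard]
      omega
  · intro S hS
    simp only [Finset.mem_powersetCard] at hS
    obtain ⟨hsub, hcard⟩ := hS
    have hmS : m ∉ S := fun h => by simpa using hsub h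
    have hlS : l ∉ insert m S := by
      intro h
      rcases Finset.mem_insert.mp h with h | h
      · exact hlm h
      · simpa using hsub h
    simp only [Finset.mem_filter, Finset.mem_powersetCard]
    refine ⟨⟨fun x _ => Finset.mem_univ x, ?_⟩, Finset.mem_insert_self l _,
      Finset.mem_insert.mpr (Or.inr (Finset.mem_insert_self m S))⟩
    rw [Finset.card_insert_of_notMem hlS, Finset.card_insert_of_notMem hmS, hcard]
    omega
  · intro K hK
    simp only [Finset.mem_filter] at hK
    obtain ⟨_, hl, hm⟩ := hK
    rw [Finset.insert_erase (Finset.mem_erase.mpr ⟨Ne.symm hlm, hm⟩), Finset.insert_erase hl]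
  · intro S hS
    simp only [Finset.mem_powersetCard] at hS
    obtain ⟨hsub, _⟩ := hS
    have hmS : m ∉ S := fun h => by simpa using hsub h
    have hlS : l ∉ insert m S := by
      intro h
      rcases Finset.mem_insert.mp h with h | h
      · exact hlm h
      · simpa using hsub h
    rw [Finset.erase_insert hlS, Finset.erase_insert hmS]

lemma choose_identity {n k : ℕ} (hk2 : 2 ≤ k) (hkn : k ≤ n) :
    n.choose k * k * (k - 1) = n * (n - 1) * (n - 2).choose (k - 2) := by
  obtain ⟨k', rfl⟩ : ∃ k', k = k' + 2 := ⟨k - 2, by omega⟩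
  obtain ⟨n', rfl⟩ : ∃ n', n = n' + 2 := ⟨n - 2, by omega⟩
  have h1 := Nat.add_one_mul_choose_eq n' k'
  have h2 := Nat.add_one_mul_choose_eq (n' + 1) (k' + 1)
  simp only [show k' + 2 - 1 = k' + 1 from rfl, show n' + 2 - 1 = n' + 1 from rfl,
    Nat.add_sub_cancel]
  calc (n' + 2).choose (k' + 2) * (k' + 2) * (k' + 1)
      = (n' + 2) * ((n' + 1).choose (k' + 1) * (k' + 1)) := by rw [← h2]; ring
    _ = (n' + 2) * ((n' + 1) * n'.choose k') := by rw [← h1]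
    _ = (n' + 2) * (n' + 1) * n'.choose k' := by ring

noncomputable def updL (ι : Type*) [Fintype ι] [DecidableEq ι] (i : ι) :
    (∀ _ : ι, ι → ℝ) →L[ℝ] (∀ _ : ι, ι → ℝ) :=
  ContinuousLinearMap.pi (fun j => if j = i then 0 else ContinuousLinearMap.proj j)

lemma updL_apply {ι : Type*} [Fintype ι] [DecidableEq ι] (i : ι) (x : ∀ _ : ι, ι → ℝ) (j : ι) :
    updL ι i x j = if j = i then 0 else x j := by
  simp only [updL, ContinuousLinearMap.pi_apply]
  split_ifs <;> simp

lemma upd_add {ι : Type*} [Fintype ι] [DecidableEq ι] (i : ι) (C x : ∀ _ : ι, ι → ℝ) (w : ι → ℝ) :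
    Function.update C i w + updL ι i x = Function.update (C + x) i w := by
  funext j
  rcases eq_or_ne j i with rfl | hj
  · simp [updL_apply]
  · simp [Function.update_of_ne hj, updL_apply, hj]

-- first derivative: det of affine family
lemma hasFDerivAt_det_affine {E' : Type*} [NormedAddCommGroup E'] [NormedSpace ℝ E']
    {ι : Type*} [Fintype ι] [DecidableEq ι]
    (L : E' →L[ℝ] (∀ _ : ι, ι → ℝ)) (C : ∀ _ : ι, ι → ℝ) (q : E') :
    HasFDerivAt (fun p => detCML ι (C + L p))
      (((detCML ι).linearDeriv (C + L q)).comp L) q :=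
  HasFDerivAt.comp q ((detCML ι).hasFDerivAt (x := C + L q)) (L.hasFDerivAt.const_add C)

-- second derivative step
lemma hasFDerivAt_linearDeriv_affine {E' : Type*} [NormedAddCommGroup E'] [NormedSpace ℝ E']
    {ι : Type*} [Fintype ι] [DecidableEq ι]
    (L : E' →L[ℝ] (∀ _ : ι, ι → ℝ)) (C : ∀ _ : ι, ι → ℝ) (w : ∀ _ : ι, ι → ℝ) (g : E') :
    HasFDerivAt (fun q => (detCML ι).linearDeriv (C + L q) w)
      (∑ i, ((detCML ι).linearDeriv (Function.update (C + L g) i (w i))).comp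
        ((updL ι i).comp L)) g := by
  have hfun : (fun q => (detCML ι).linearDeriv (C + L q) w)
      = fun q => ∑ i, detCML ι (Function.update (C + L q) i (w i)) := by
    funext q
    rw [ContinuousMultilinearMap.linearDeriv_apply]
  rw [hfun]
  apply HasFDerivAt.fun_sum
  intro i _
  have hfun2 : (fun q => detCML ι (Function.update (C + L q) i (w i)))
      = fun q => detCML ι (Function.update C i (w i) + ((updL ι i).comp L) q) := by
    funext q
    rw [ContinuousLinearMap.comp_apply, upd_add]
  rw [hfun2]
  have := hasFDerivAt_det_affine ((updL ι i).comp L) (Function.update C i (w i)) g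
  rwa [ContinuousLinearMap.comp_apply, upd_add] at this

lemma sum_indicator_pair {n : ℕ} (K : Finset (Fin n)) (a b : Fin n) (P : Prop) [Decidable P]
    (c : ℝ) :
    (∑ i : {x // x ∈ K}, ∑ j : {x // x ∈ K},
        (if ((i : Fin n) = a ∧ (j : Fin n) = b ∧ P) then c else 0))
      = if a ∈ K ∧ b ∈ K ∧ P then c else 0 := by
  classical
  have h1 : ∀ x : Fin n, (∑ j : {x // x ∈ K}, (if (x = a ∧ (j : Fin n) = b ∧ P) then c else 0))
      = ∑ y ∈ K, (if (x = a ∧ y = b ∧ P) then c else 0) := by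
    intro x
    exact Finset.sum_coe_sort K (fun y => if (x = a ∧ y = b ∧ P) then c else 0)
  calc (∑ i : {x // x ∈ K}, ∑ j : {x // x ∈ K},
        (if ((i : Fin n) = a ∧ (j : Fin n) = b ∧ P) then c else 0))
      = ∑ x ∈ K, ∑ y ∈ K, (if (x = a ∧ y = b ∧ P) then c else 0) := by
        rw [← Finset.sum_coe_sort K (fun x => ∑ y ∈ K, (if (x = a ∧ y = b ∧ P) then c else 0))]
        exact Finset.sum_congr rfl (fun i _ => h1 i)
    _ = if a ∈ K ∧ b ∈ K ∧ P then c else 0 := by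
        simp only [ite_and]
        have h2 : ∀ x : Fin n, (∑ y ∈ K, if x = a then if y = b then if P then c else 0 else 0 else 0)
            = if x = a then (∑ y ∈ K, if y = b then if P then c else 0 else 0) else 0 := by
          intro x; split_ifs <;> simp
        rw [Finset.sum_congr rfl (fun x _ => h2 x), Finset.sum_ite_eq' K a]
        by_cases h : a ∈ K <;> simp [h, Finset.sum_ite_eq' K b]

noncomputable def LKdef {n ν : ℕ} (cphat : Fin n → Fin ν → ℝ) (K : Finset (Fin n)) :
    (Fin n → Fin ν → ℝ) →L[ℝ] ({x : Fin n // x ∈ K} → {x : Fin n // x ∈ K} → ℝ) :=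
  ContinuousLinearMap.pi fun i => ContinuousLinearMap.pi fun j =>
    ∑ α, (cphat (i : Fin n) α) •
      ((ContinuousLinearMap.proj (R := ℝ) (φ := fun _ : Fin ν => ℝ) α).comp
        (ContinuousLinearMap.proj (R := ℝ) (φ := fun _ : Fin n => Fin ν → ℝ) (j : Fin n)))

lemma LKdef_apply {n ν : ℕ} (cphat : Fin n → Fin ν → ℝ) (K : Finset (Fin n))
    (q : Fin n → Fin ν → ℝ) (i j : {x : Fin n // x ∈ K}) :
    LKdef cphat K q i j = ∑ α, cphat (i : Fin n) α * q (j : Fin n) α := by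
  simp [LKdef, ContinuousLinearMap.pi_apply, ContinuousLinearMap.sum_apply,
    ContinuousLinearMap.smul_apply, ContinuousLinearMap.comp_apply,
    ContinuousLinearMap.proj_apply]

noncomputable def CKdef {n ν : ℕ} (fhat : ℝ) (cphat : Fin n → Fin ν → ℝ)
    (g : Fin n → Fin ν → ℝ) (K : Finset (Fin n)) :
    {x : Fin n // x ∈ K} → {x : Fin n // x ∈ K} → ℝ :=
  fun i j => fhat * (if i = j then 1 else 0) - ∑ α, cphat (i : Fin n) α * g (j : Fin n) α

/-- The Hessian at `q = g` of the Weierstrass-type function `E` differs from the Hessian of `f`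
by the skew term `-(n(k-1))/(k(n-1) f̂) (p̂^l_λ p̂^m_μ - p̂^l_μ p̂^m_λ)` for `l ≠ m`, agrees with
it for `l = m`, and hence the two Hessians agree as quadratic forms on rank-one matrices. -/
theorem weierstrass_function_hessian (n ν k : ℕ) (hk2 : 2 ≤ k) (hkn : k ≤ n) (hn2 : 2 ≤ n)
    (f : (Fin n → Fin ν → ℝ) → ℝ) (hf : ContDiff ℝ 2 f)
    (g : Fin n → Fin ν → ℝ)
    (fhat : ℝ) (hfhat : fhat = f g) (hne : fhat ≠ 0)
    (phat : Fin n → Fin ν → ℝ)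
    (hphat : ∀ i α, phat i α = fderiv ℝ f g (Pi.single i (Pi.single α 1)))
    (M : (Fin n → Fin ν → ℝ) → Matrix (Fin n) (Fin n) ℝ)
    (hM : ∀ q i j, M q i j
      = fhat * (if i = j then 1 else 0)
        + ((n : ℝ) / (k : ℝ)) * ∑ α, phat i α * (q j α - g j α))
    (E : (Fin n → Fin ν → ℝ) → ℝ)
    (hE : ∀ q, E q
      = f q - (1 / ((n.choose k : ℝ) * fhat ^ (k - 1))) *
          ∑ K ∈ Finset.univ.powersetCard k,
            ((M q).submatrix (fun i : {x : Fin n // x ∈ K} => (i : Fin n))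
              (fun j : {x : Fin n // x ∈ K} => (j : Fin n))).det)
    (HessE HessF : Fin n → Fin ν → Fin n → Fin ν → ℝ)
    (hHessE : ∀ l lam m mu, HessE l lam m mu
      = fderiv ℝ (fun q => fderiv ℝ E q (Pi.single m (Pi.single mu 1))) g
          (Pi.single l (Pi.single lam 1)))
    (hHessF : ∀ l lam m mu, HessF l lam m mu
      = fderiv ℝ (fun q => fderiv ℝ f q (Pi.single m (Pi.single mu 1))) g
          (Pi.single l (Pi.single lam 1))) :
    (∀ l m lam mu, l ≠ m → HessE l lam m mu
      = HessF l lam m mu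
        - ((n : ℝ) * ((k : ℝ) - 1)) / ((k : ℝ) * ((n : ℝ) - 1) * fhat)
          * (phat l lam * phat m mu - phat l mu * phat m lam)) ∧
    (∀ l lam mu, HessE l lam l mu = HessF l lam l mu) ∧
    (∀ (ξ : Fin ν → ℝ) (η : Fin n → ℝ),
      ∑ l, ∑ m, ∑ lam, ∑ mu, HessE l lam m mu * (ξ lam * η l) * (ξ mu * η m)
        = ∑ l, ∑ m, ∑ lam, ∑ mu, HessF l lam m mu * (ξ lam * η l) * (ξ mu * η m)) := by
  classical
  set cphat : Fin n → Fin ν → ℝ := fun i α => ((n:ℝ)/(k:ℝ)) * phat i α with hcphat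
  set cc : ℝ := 1 / ((n.choose k : ℝ) * fhat ^ (k - 1)) with hccdef
  -- affine decomposition of the submatrices
  have hCL : ∀ (K : Finset (Fin n)) (q : Fin n → Fin ν → ℝ),
      CKdef fhat cphat g K + LKdef cphat K q
        = fun (i j : {x : Fin n // x ∈ K}) => M q (i : Fin n) (j : Fin n) := by
    intro K q
    funext i j
    simp only [Pi.add_apply, CKdef, LKdef_apply, hM]
    rw [Finset.mul_sum]
    have h1 : ∀ α, ((n:ℝ)/(k:ℝ)) * (phat (i : Fin n) α * (q (j : Fin n) α - g (j : Fin n) α))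
        = cphat (i : Fin n) α * q (j : Fin n) α - cphat (i : Fin n) α * g (j : Fin n) α := by
      intro α; rw [hcphat]; ring
    rw [Finset.sum_congr rfl (fun α _ => h1 α), Finset.sum_sub_distrib]
    have h3 : (fhat * if (i : Fin n) = (j : Fin n) then (1:ℝ) else 0)
        = fhat * if i = j then (1:ℝ) else 0 := by
      by_cases hij : i = j
      · simp [hij]
      · have hcoe : ((i : Fin n)) ≠ (j : Fin n) := fun hh => hij (Subtype.coe_inj.mp hh)
        simp [hij, hcoe]
    rw [h3]
    ring
  have hdet : ∀ (K : Finset (Fin n)) q,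
      ((M q).submatrix (fun i : {x : Fin n // x ∈ K} => (i : Fin n))
        (fun j : {x : Fin n // x ∈ K} => (j : Fin n))).det
        = detCML {x : Fin n // x ∈ K} (CKdef fhat cphat g K + LKdef cphat K q) := by
    intro K q
    rw [detCML_apply, hCL K q]
    rfl
  have hEfun : E = fun q => f q - cc * ∑ K ∈ Finset.univ.powersetCard k,
      detCML {x : Fin n // x ∈ K} (CKdef fhat cphat g K + LKdef cphat K q) := by
    funext q
    rw [hE q]
    congr 1
    rw [hccdef]
    congr 1
    exact Finset.sum_congr rfl (fun K _ => hdet K q)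
  have hdf : Differentiable ℝ f := hf.differentiable (by norm_num)
  have hEderiv : ∀ q, fderiv ℝ E q = fderiv ℝ f q
      - cc • ∑ K ∈ Finset.univ.powersetCard k,
          ((detCML {x : Fin n // x ∈ K}).linearDeriv
            (CKdef fhat cphat g K + LKdef cphat K q)).comp (LKdef cphat K) := by
    intro q
    have hS : HasFDerivAt (fun p => ∑ K ∈ Finset.univ.powersetCard k,
        detCML {x : Fin n // x ∈ K} (CKdef fhat cphat g K + LKdef cphat K p))
        (∑ K ∈ Finset.univ.powersetCard k,
          ((detCML {x : Fin n // x ∈ K}).linearDeriv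
            (CKdef fhat cphat g K + LKdef cphat K q)).comp (LKdef cphat K)) q :=
      HasFDerivAt.fun_sum (fun K _ => hasFDerivAt_det_affine (LKdef cphat K) (CKdef fhat cphat g K) q)
    have hEh : HasFDerivAt E (fderiv ℝ f q
        - cc • ∑ K ∈ Finset.univ.powersetCard k,
          ((detCML {x : Fin n // x ∈ K}).linearDeriv
            (CKdef fhat cphat g K + LKdef cphat K q)).comp (LKdef cphat K)) q := by
      rw [hEfun]
      exact ((hdf q).hasFDerivAt).sub (hS.const_mul cc)
    exact hEh.fderiv
  -- main formula
  have main : ∀ l lam m mu, HessE l lam m mu = HessF l lam m mu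
      - cc * ∑ K ∈ Finset.univ.powersetCard k,
        ((if m ∈ K ∧ l ∈ K ∧ l ≠ m then cphat m mu * cphat l lam * fhat ^ (k-2) else 0)
          - (if l ∈ K ∧ m ∈ K ∧ l ≠ m then cphat l mu * cphat m lam * fhat ^ (k-2) else 0)) := by
    intro l lam m mu
    set vm : Fin n → Fin ν → ℝ := Pi.single m (Pi.single mu 1) with hvm
    set ul : Fin n → Fin ν → ℝ := Pi.single l (Pi.single lam 1) with hul
    have hΨ : (fun q => fderiv ℝ E q vm) = fun q =>
        fderiv ℝ f q vm - cc * ∑ K ∈ Finset.univ.powersetCard k,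
          (detCML {x : Fin n // x ∈ K}).linearDeriv
            (CKdef fhat cphat g K + LKdef cphat K q) (LKdef cphat K vm) := by
      funext q
      rw [hEderiv q]
      simp [ContinuousLinearMap.sub_apply, ContinuousLinearMap.smul_apply,
        ContinuousLinearMap.sum_apply, ContinuousLinearMap.comp_apply, smul_eq_mul]
    have hΨ1d : DifferentiableAt ℝ (fun q => fderiv ℝ f q vm) g := by
      have h1 : ContDiff ℝ 1 (fderiv ℝ f) := hf.fderiv_right (by norm_num)
      exact (h1.differentiable (by norm_num) g).clm_apply (differentiableAt_const _)
    have hS2 : HasFDerivAt (fun q => ∑ K ∈ Finset.univ.powersetCard k,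
        (detCML {x : Fin n // x ∈ K}).linearDeriv
          (CKdef fhat cphat g K + LKdef cphat K q) (LKdef cphat K vm))
        (∑ K ∈ Finset.univ.powersetCard k, ∑ i,
          ((detCML {x : Fin n // x ∈ K}).linearDeriv
            (Function.update (CKdef fhat cphat g K + LKdef cphat K g) i (LKdef cphat K vm i))).comp
            ((updL {x : Fin n // x ∈ K} i).comp (LKdef cphat K))) g :=
      HasFDerivAt.fun_sum (fun K _ =>
        hasFDerivAt_linearDeriv_affine (LKdef cphat K) (CKdef fhat cphat g K)
          (LKdef cphat K vm) g)
    have step : HessE l lam m mu = HessF l lam m mu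
        - cc * ((∑ K ∈ Finset.univ.powersetCard k, ∑ i,
          ((detCML {x : Fin n // x ∈ K}).linearDeriv
            (Function.update (CKdef fhat cphat g K + LKdef cphat K g) i (LKdef cphat K vm i))).comp
            ((updL {x : Fin n // x ∈ K} i).comp (LKdef cphat K))) ul) := by
      rw [hHessE l lam m mu, ← hvm, ← hul, hΨ,
        fderiv_fun_sub hΨ1d ((hS2.differentiableAt).const_mul cc),
        fderiv_const_mul hS2.differentiableAt cc, hS2.fderiv]
      rw [hHessF l lam m mu, ← hvm, ← hul]
      simp [ContinuousLinearMap.sub_apply, ContinuousLinearMap.smul_apply, smul_eq_mul]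
    rw [step]
    congr 1
    rw [ContinuousLinearMap.sum_apply]
    congr 1
    apply Finset.sum_congr rfl
    intro K hK
    have hkcard : Fintype.card {x : Fin n // x ∈ K} = k := by
      rw [Fintype.card_coe]
      exact (Finset.mem_powersetCard.mp hK).2
    -- evaluate the derivative application
    rw [ContinuousLinearMap.sum_apply]
    have heval : ∀ i : {x : Fin n // x ∈ K},
        (((detCML {x : Fin n // x ∈ K}).linearDeriv
          (Function.update (CKdef fhat cphat g K + LKdef cphat K g) i (LKdef cphat K vm i))).comp
          ((updL {x : Fin n // x ∈ K} i).comp (LKdef cphat K))) ul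
        = ∑ j, detCML {x : Fin n // x ∈ K}
            (Function.update (Function.update (CKdef fhat cphat g K + LKdef cphat K g) i
              (LKdef cphat K vm i)) j
              (if j = i then 0 else LKdef cphat K ul j)) := by
      intro i
      rw [ContinuousLinearMap.comp_apply, ContinuousLinearMap.comp_apply,
        ContinuousMultilinearMap.linearDeriv_apply]
      apply Finset.sum_congr rfl
      intro j _
      rw [updL_apply]
    rw [Finset.sum_congr rfl (fun i _ => heval i)]
    -- compute the entries
    have hXK : CKdef fhat cphat g K + LKdef cphat K g
        = fun (i j : {x : Fin n // x ∈ K}) => fhat * (if i = j then (1:ℝ) else 0) := by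
      rw [hCL K g]
      funext i j
      rw [hM]
      by_cases hij : i = j
      · simp [hij]
      · have hcoe : ((i : Fin n)) ≠ (j : Fin n) := fun hh => hij (Subtype.coe_inj.mp hh)
        simp [hij, hcoe]
    have hwv : ∀ i : {x : Fin n // x ∈ K}, LKdef cphat K vm i
        = (cphat (i : Fin n) mu) • (fun s : {x : Fin n // x ∈ K} =>
            if (s : Fin n) = m then (1:ℝ) else 0) := by
      intro i
      funext s
      rw [LKdef_apply]
      by_cases h : (s : Fin n) = m
      · simp [hvm, h, Pi.single_apply, mul_ite, Finset.sum_ite_eq']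
      · simp [hvm, h, Pi.single_apply]
    have hwu : ∀ j : {x : Fin n // x ∈ K}, LKdef cphat K ul j
        = (cphat (j : Fin n) lam) • (fun s : {x : Fin n // x ∈ K} =>
            if (s : Fin n) = l then (1:ℝ) else 0) := by
      intro j
      funext s
      rw [LKdef_apply]
      by_cases h : (s : Fin n) = l
      · simp [hul, h, Pi.single_apply, mul_ite, Finset.sum_ite_eq']
      · simp [hul, h, Pi.single_apply]
    have hT : ∀ i j : {x : Fin n // x ∈ K},
        detCML {x : Fin n // x ∈ K}
          (Function.update (Function.update (CKdef fhat cphat g K + LKdef cphat K g) i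
            (LKdef cphat K vm i)) j (if j = i then 0 else LKdef cphat K ul j))
        = (if (i : Fin n) = m ∧ (j : Fin n) = l ∧ l ≠ m
            then cphat m mu * cphat l lam * fhat ^ (k-2) else 0)
          - (if (i : Fin n) = l ∧ (j : Fin n) = m ∧ l ≠ m
            then cphat l mu * cphat m lam * fhat ^ (k-2) else 0) := by
      intro i j
      rcases eq_or_ne j i with rfl | hji
      · rw [if_pos rfl, Function.update_idem]
        have hc1 : ¬((j : Fin n) = m ∧ (j : Fin n) = l ∧ l ≠ m) :=
          fun h => h.2.2 (h.2.1.symm.trans h.1)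
        have hc2 : ¬((j : Fin n) = l ∧ (j : Fin n) = m ∧ l ≠ m) :=
          fun h => h.2.2 (h.1.symm.trans h.2.1)
        rw [if_neg hc1, if_neg hc2, sub_zero]
        exact detCML_update_zero _ _
      · rw [if_neg hji, hwv i, hwu j, hXK]
        rw [ContinuousMultilinearMap.map_update_smul, Function.update_comm (Ne.symm hji),
          ContinuousMultilinearMap.map_update_smul, Function.update_comm hji,
          smul_eq_mul, smul_eq_mul]
        by_cases hlK : l ∈ K
        · by_cases hmK : m ∈ K
          · have hχm : (fun s : {x : Fin n // x ∈ K} => if (s : Fin n) = m then (1:ℝ) else 0)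
                = Pi.single (⟨m, hmK⟩ : {x : Fin n // x ∈ K}) 1 := by
              funext s
              rw [Pi.single_apply]
              simp [Subtype.ext_iff]
            have hχl : (fun s : {x : Fin n // x ∈ K} => if (s : Fin n) = l then (1:ℝ) else 0)
                = Pi.single (⟨l, hlK⟩ : {x : Fin n // x ∈ K}) 1 := by
              funext s
              rw [Pi.single_apply]
              simp [Subtype.ext_iff]
            rw [hχm, hχl, detCML_apply,
              det_updateTwo fhat i j ⟨m, hmK⟩ ⟨l, hlK⟩ (Ne.symm hji), hkcard]
            have e1 : (i = (⟨m, hmK⟩ : {x : Fin n // x ∈ K}) ∧ j = ⟨l, hlK⟩)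
                ↔ ((i : Fin n) = m ∧ (j : Fin n) = l ∧ l ≠ m) := by
              constructor
              · rintro ⟨rfl, rfl⟩
                exact ⟨rfl, rfl, fun h => hji (Subtype.ext h)⟩
              · rintro ⟨h1, h2, h3⟩
                exact ⟨Subtype.ext h1, Subtype.ext h2⟩
            have e2 : (i = (⟨l, hlK⟩ : {x : Fin n // x ∈ K}) ∧ j = ⟨m, hmK⟩)
                ↔ ((i : Fin n) = l ∧ (j : Fin n) = m ∧ l ≠ m) := by
              constructor
              · rintro ⟨rfl, rfl⟩
                exact ⟨rfl, rfl, fun h => hji (Subtype.ext h.symm)⟩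
              · rintro ⟨h1, h2, h3⟩
                exact ⟨Subtype.ext h1, Subtype.ext h2⟩
            simp only [e1, e2]
            split_ifs with h1 h2 h2
            · exact absurd (h2.1.symm.trans h1.1) h1.2.2
            · rw [h1.1, h1.2.1]; ring
            · rw [h2.1, h2.2.1]; ring
            · ring
          · have hχm0 : (fun s : {x : Fin n // x ∈ K} => if (s : Fin n) = m then (1:ℝ) else 0)
                = 0 := by
              funext s
              have : (s : Fin n) ≠ m := fun h => hmK (h ▸ s.2)
              simp [this]
            rw [hχm0, Function.update_comm (Ne.symm hji), detCML_update_zero]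
            have hc1 : ¬((i : Fin n) = m ∧ (j : Fin n) = l ∧ l ≠ m) :=
              fun h => hmK (h.1 ▸ i.2)
            have hc2 : ¬((i : Fin n) = l ∧ (j : Fin n) = m ∧ l ≠ m) :=
              fun h => hmK (h.2.1 ▸ j.2)
            rw [if_neg hc1, if_neg hc2]
            ring
        · have hχl0 : (fun s : {x : Fin n // x ∈ K} => if (s : Fin n) = l then (1:ℝ) else 0)
              = 0 := by
            funext s
            have : (s : Fin n) ≠ l := fun h => hlK (h ▸ s.2)
            simp [this]
          rw [hχl0, detCML_update_zero]
          have hc1 : ¬((i : Fin n) = m ∧ (j : Fin n) = l ∧ l ≠ m) :=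
            fun h => hlK (h.2.1 ▸ j.2)
          have hc2 : ¬((i : Fin n) = l ∧ (j : Fin n) = m ∧ l ≠ m) :=
            fun h => hlK (h.1 ▸ i.2)
          rw [if_neg hc1, if_neg hc2]
          ring
    rw [Finset.sum_congr rfl (fun i _ => Finset.sum_congr rfl (fun j _ => hT i j))]
    rw [Finset.sum_congr rfl (fun i _ => Finset.sum_sub_distrib _ _), Finset.sum_sub_distrib]
    rw [sum_indicator_pair K m l (l ≠ m) (cphat m mu * cphat l lam * fhat ^ (k-2)),
      sum_indicator_pair K l m (l ≠ m) (cphat l mu * cphat m lam * fhat ^ (k-2))]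
  -- coefficient identity
  have hchoose0 : (0:ℝ) < (n.choose k : ℝ) := by exact_mod_cast Nat.choose_pos hkn
  have hk0 : (k:ℝ) ≠ 0 := by
    have : (0:ℕ) < k := by omega
    exact_mod_cast this.ne'
  have hn0 : (n:ℝ) ≠ 0 := by
    have : (0:ℕ) < n := by omega
    exact_mod_cast this.ne'
  have hn1 : (n:ℝ) - 1 ≠ 0 := by
    have : (2:ℝ) ≤ (n:ℝ) := by exact_mod_cast hn2
    intro h
    linarith
  have hfp : fhat ^ (k-2) ≠ 0 := pow_ne_zero _ hne
  have key : (n.choose k : ℝ) * (k:ℝ) * ((k:ℝ) - 1)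
      = (n:ℝ) * ((n:ℝ) - 1) * ((n-2).choose (k-2) : ℝ) := by
    have h := choose_identity hk2 hkn
    have h1k : 1 ≤ k := by omega
    have h1n : 1 ≤ n := by omega
    push_cast [Nat.cast_sub h1k, Nat.cast_sub h1n] at h ⊢
    exact_mod_cast h
  have hccval : cc = 1 / ((n.choose k : ℝ) * (fhat ^ (k-2) * fhat)) := by
    rw [hccdef, show k - 1 = (k-2) + 1 from by omega, pow_succ]
  -- part 1
  have part1 : ∀ l m lam mu, l ≠ m → HessE l lam m mu
      = HessF l lam m mu
        - ((n : ℝ) * ((k : ℝ) - 1)) / ((k : ℝ) * ((n : ℝ) - 1) * fhat)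
          * (phat l lam * phat m mu - phat l mu * phat m lam) := by
    intro l m lam mu hlm
    rw [main l lam m mu]
    congr 1
    have hml : m ≠ l := Ne.symm hlm
    simp only [hlm, hml, ne_eq, not_false_eq_true, and_true]
    rw [Finset.sum_sub_distrib, Finset.sum_ite, Finset.sum_const, Finset.sum_const_zero, add_zero,
      Finset.sum_ite, Finset.sum_const, Finset.sum_const_zero, add_zero,
      count_pairs hk2 m l hml, count_pairs hk2 l m hlm]
    simp only [nsmul_eq_mul, hcphat, hccval]
    have hN : ((n-2).choose (k-2) : ℝ) = ((n:ℝ) * ((n:ℝ)-1))⁻¹ * ((n.choose k : ℝ) * (k:ℝ) * ((k:ℝ)-1)) := by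
      rw [key]
      field_simp
    rw [hN]
    field_simp
  -- part 2
  have part2 : ∀ l lam mu, HessE l lam l mu = HessF l lam l mu := by
    intro l lam mu
    rw [main l lam l mu]
    simp
  refine ⟨part1, part2, ?_⟩
  -- part 3
  intro ξ η
  rw [← sub_eq_zero, ← Finset.sum_sub_distrib]
  apply Finset.sum_eq_zero
  intro l _
  rw [← Finset.sum_sub_distrib]
  apply Finset.sum_eq_zero
  intro m _
  rw [← Finset.sum_sub_distrib]
  simp only [← Finset.sum_sub_distrib]
  rcases eq_or_ne l m with rfl | hlm
  · apply Finset.sum_eq_zero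
    intro lam _
    apply Finset.sum_eq_zero
    intro mu _
    rw [part2 l lam mu]
    ring
  · set s : ℝ := ((n : ℝ) * ((k : ℝ) - 1)) / ((k : ℝ) * ((n : ℝ) - 1) * fhat) with hs
    have expand : ∀ lam mu,
        HessE l lam m mu * (ξ lam * η l) * (ξ mu * η m)
          - HessF l lam m mu * (ξ lam * η l) * (ξ mu * η m)
        = (-(s) * (η l * η m)) * ((phat l lam * ξ lam) * (phat m mu * ξ mu))
          - (-(s) * (η l * η m)) * ((phat l mu * ξ mu) * (phat m lam * ξ lam)) := by
      intro lam mu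
      rw [part1 l m lam mu hlm]
      ring
    rw [Finset.sum_congr rfl (fun lam _ => Finset.sum_congr rfl (fun mu _ => expand lam mu))]
    have hfactor : ∀ (c : ℝ) (X Y : Fin ν → Fin ν → ℝ),
        ∑ lam, ∑ mu, (c * X lam mu - c * Y lam mu)
        = c * (∑ lam, ∑ mu, X lam mu) - c * (∑ lam, ∑ mu, Y lam mu) := by
      intro c X Y
      simp [Finset.sum_sub_distrib, Finset.mul_sum]
    rw [hfactor]
    have hzero : (∑ lam, ∑ mu, (phat l lam * ξ lam) * (phat m mu * ξ mu))
        = ∑ lam, ∑ mu, (phat l mu * ξ mu) * (phat m lam * ξ lam) := by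
      rw [Finset.sum_comm]
    rw [hzero]
    ring
end
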